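/- Many-one polynomial reductions between TFNP problems induce polynomial reductions between their canonical disjoint coNP pairs. -/

import Mathlib

def nlen (x : ℕ) : ℕ := Nat.size x

structure TFNPpb (PTR : (ℕ → ℕ → Prop) → Prop) where
  p : Polynomial ℕ
  R : ℕ → ℕ → Prop
  dec : PTR R
  total : ∀ x, ∃ y, nlen y ≤ p.eval (nlen x) ∧ R x y

def Sol {PTR} (A : TFNPpb PTR) (x y : ℕ) : Prop :=
  nlen y ≤ A.p.eval (nlen x) ∧ A.R x y

/-- Membership of a coded pair `u = (x, C)` (of an input and a Boolean circuit,
circuits are coded by numbers with evaluation map `ceval`) in the component `i`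
of the canonical disjoint coNP pair of a TFNP problem `A`:
every solution `y` of `A` at `x` has `C(y) = i`. -/
def CanonMem {PTR} (ceval : ℕ → ℕ → Bool) (A : TFNPpb PTR) (i : Bool) (u : ℕ) : Prop :=
  ∀ y, Sol A (Nat.unpair u).1 y → ceval (Nat.unpair u).2 y = i

/-- a many-one polynomial reduction `(f,g)` of the TFNP problem `P` to `Q`
(whose solutions have exact lengths `p(|x|)`, resp. `q(|x|)`) induces, via
`h (x, C) = (f x, D x C)` where the circuit `D x C` computes `y ↦ C (g x y)`,
a polynomial reduction of the canonical disjoint coNP pair of `P` to that of `Q`. -/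
theorem manyone_reduces_canonical_coNP_pairs
    (PTR : (ℕ → ℕ → Prop) → Prop)
    (PTF : (ℕ → ℕ) → Prop) (PTF2 : (ℕ → ℕ → ℕ) → Prop)
    (ceval : ℕ → ℕ → Bool)
    (P Q : TFNPpb PTR)
    -- solutions have exact length p(|x|), resp. q(|x|)
    (hPlen : ∀ x y, P.R x y → nlen y = P.p.eval (nlen x))
    (hQlen : ∀ x y, Q.R x y → nlen y = Q.p.eval (nlen x))
    -- the many-one polynomial reduction (f, g) of P to Q
    (f : ℕ → ℕ) (g : ℕ → ℕ → ℕ) (hf : PTF f) (hg : PTF2 g)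
    (hred : ∀ x z, Sol Q (f x) z → Sol P x (g x z))
    -- the (polynomial-time) circuit transformer D, with D x C computing y ↦ C (g x y)
    (D : ℕ → ℕ → ℕ)
    (hD : ∀ x C y, nlen y = Q.p.eval (nlen (f x)) → ceval (D x C) y = ceval C (g x y))
    (h : ℕ → ℕ)
    (hdef : h = fun u => Nat.pair (f (Nat.unpair u).1) (D (Nat.unpair u).1 (Nat.unpair u).2))
    (hpt : PTF h) :
    PTF h ∧ ∀ (i : Bool) (u : ℕ), CanonMem ceval P i u → CanonMem ceval Q i (h u) := by
  refine ⟨hpt, fun i u hu z hz => ?_⟩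
  set x := (Nat.unpair u).1
  set C := (Nat.unpair u).2
  have hhu : Nat.unpair (h u) = (f x, D x C) := by
    simp [hdef, Nat.unpair_pair]
    exact ⟨rfl, rfl⟩
  rw [hhu] at hz ⊢
  simp only
  have hlen : nlen z = Q.p.eval (nlen (f x)) := hQlen _ _ hz.2
  rw [hD x C z hlen]
  exact hu _ (hred x z hz)
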